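/- Let H(t) be a real-valued, bounded, continuously differentiable function on (0,∞) such that H'(t) → 0 as t → ∞. Then for every constant 0 < A < ∞ there exists a sequence T_k → ∞ such that (1/A) ∫_{T_k}^{T_k+A} t·H'(t) dt → 0 as k → ∞. -/

import Mathlib

open Filter MeasureTheory

lemma core_lemma (G : ℝ → ℝ) (B C ε : ℝ) (hB : 1 ≤ B) (hε : 0 < ε)
    (hG : ContinuousOn G (Set.Ici B))
    (hC : ∀ X, B ≤ X → ∫ t in B..X, G t ≤ C)
    (hpos : ∀ T, B ≤ T → ε / T ≤ G T) : False := by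
  have hB0 : (0:ℝ) < B := lt_of_lt_of_le one_pos hB
  have hC0 : 0 ≤ C := by
    have := hC B le_rfl
    simpa using this
  set X := B * Real.exp ((C + 1) / ε) with hX
  have hexp : 1 ≤ Real.exp ((C + 1) / ε) :=
    Real.one_le_exp (by positivity)
  have hBX : B ≤ X := le_mul_of_one_le_right hB0.le hexp
  have huIcc : Set.uIcc B X ⊆ Set.Ici B := by
    rw [Set.uIcc_of_le hBX]; exact Set.Icc_subset_Ici_self
  have h0not : (0:ℝ) ∉ Set.uIcc B X := by
    rw [Set.uIcc_of_le hBX]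
    intro h; exact absurd h.1 (by linarith)
  have h1 : IntervalIntegrable (fun t => ε / t) volume B X := by
    apply ContinuousOn.intervalIntegrable
    exact continuousOn_const.div continuousOn_id
      (fun x hx h0 => h0not (h0 ▸ hx))
  have h2 : IntervalIntegrable G volume B X :=
    (hG.mono huIcc).intervalIntegrable
  have hmono : ∫ t in B..X, ε / t ≤ ∫ t in B..X, G t :=
    intervalIntegral.integral_mono_on hBX h1 h2 (fun t ht => hpos t ht.1)
  have hcomp : ∫ t in B..X, ε / t = C + 1 := by
    have : ∫ t in B..X, ε / t = ε * ∫ t in B..X, 1 / t := by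
      rw [← intervalIntegral.integral_const_mul]
      congr 1; ext t; ring
    rw [this, integral_one_div h0not]
    have hXB : X / B = Real.exp ((C + 1) / ε) := by
      rw [hX]; field_simp
    rw [hXB, Real.log_exp]
    field_simp
  have := hC X hBX
  linarith [hmono, hcomp ▸ hmono]

lemma exists_small (G : ℝ → ℝ) (B C ε : ℝ) (hB : 1 ≤ B) (hε : 0 < ε)
    (hG : ContinuousOn G (Set.Ici B))
    (hC : ∀ X, B ≤ X → |∫ t in B..X, G t| ≤ C) :
    ∃ T, B ≤ T ∧ T * |G T| < ε := by
  by_contra h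
  push_neg at h
  -- h : ∀ T, B ≤ T → ε ≤ T * |G T|
  have hB0 : (0:ℝ) < B := lt_of_lt_of_le one_pos hB
  have hne : ∀ T, B ≤ T → G T ≠ 0 := by
    intro T hT h0
    have := h T hT
    rw [h0] at this
    simp at this
    linarith
  have habs : ∀ T, B ≤ T → ε / T ≤ |G T| := by
    intro T hT
    rw [div_le_iff₀ (lt_of_lt_of_le hB0 hT)]
    have := h T hT
    linarith [this]
  have hsign : (∀ T, B ≤ T → 0 < G T) ∨ (∀ T, B ≤ T → G T < 0) := by
    rcases (hne B le_rfl).lt_or_gt with hBneg | hBpos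
    · right
      intro T hT
      by_contra hle
      push_neg at hle
      have hTpos : 0 < G T := lt_of_le_of_ne hle (Ne.symm (hne T hT))
      obtain ⟨c, hc, hc0⟩ := intermediate_value_Icc hT (hG.mono Set.Icc_subset_Ici_self)
        ⟨le_of_lt hBneg, le_of_lt hTpos⟩
      exact hne c hc.1 hc0
    · left
      intro T hT
      by_contra hle
      push_neg at hle
      have hTneg : G T < 0 := lt_of_le_of_ne hle (hne T hT)
      obtain ⟨c, hc, hc0⟩ := intermediate_value_Icc' hT (hG.mono Set.Icc_subset_Ici_self)
        ⟨le_of_lt hTneg, le_of_lt hBpos⟩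
      exact hne c hc.1 hc0
  rcases hsign with hpos | hneg
  · exact core_lemma G B C ε hB hε hG (fun X hX => (abs_le.1 (hC X hX)).2)
      (fun T hT => le_trans (habs T hT) (le_of_eq (abs_of_pos (hpos T hT))))
  · refine core_lemma (fun t => -G t) B C ε hB hε hG.neg ?_ ?_
    · intro X hX
      rw [intervalIntegral.integral_neg]
      have := (abs_le.1 (hC X hX)).1
      linarith
    · intro T hT
      refine le_trans (habs T hT) (le_of_eq ?_)
      exact abs_of_neg (hneg T hT)


/-- Lemma 8.15 of Enss / Lemma `tdHdt`.
If `H : (0,∞) → ℝ` is bounded, continuously differentiable with `H'(t) → 0` as `t → ∞`,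
then for every `0 < A < ∞` there is a sequence `T_k → ∞` such that
`(1/A) ∫_{T_k}^{T_k+A} t H'(t) dt → 0`. -/
theorem tdHdt (H H' : ℝ → ℝ) (M : ℝ)
    (hderiv : ∀ t : ℝ, 0 < t → HasDerivAt H (H' t) t)
    (hcont : ContinuousOn H' (Set.Ioi 0))
    (hbdd : ∀ t : ℝ, 0 < t → |H t| ≤ M)
    (hlim : Tendsto H' atTop (nhds 0))
    (A : ℝ) (hA : 0 < A) :
    ∃ T : ℕ → ℝ, Tendsto T atTop atTop ∧
      Tendsto (fun k => (1 / A) * ∫ t in (T k)..(T k + A), t * H' t) atTop (nhds 0) := by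
  have hM0 : 0 ≤ M := le_trans (abs_nonneg _) (hbdd 1 one_pos)
  have hHcont : ContinuousOn H (Set.Ioi 0) := fun t ht =>
    ((hderiv t ht).continuousAt).continuousWithinAt
  have hHint : ∀ a b : ℝ, 0 < a → 0 < b → IntervalIntegrable H volume a b := by
    intro a b ha hb
    apply (hHcont.mono ?_).intervalIntegrable
    intro x hx
    exact lt_of_lt_of_le (lt_min ha hb) hx.1
  have hH'int : ∀ a b : ℝ, 0 < a → 0 < b → IntervalIntegrable H' volume a b := by
    intro a b ha hb
    apply (hcont.mono ?_).intervalIntegrable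
    intro x hx
    exact lt_of_lt_of_le (lt_min ha hb) hx.1
  have key : ∀ k : ℕ, ∃ T : ℝ, 1 ≤ T ∧ (k:ℝ) ≤ T ∧
      |T * (H (T + A) - H T)| < 1/((k:ℝ)+1) ∧
      ∀ t, T ≤ t → |H' t| ≤ 1/((k:ℝ)+1) := by
    intro k
    have hε : (0:ℝ) < 1/((k:ℝ)+1) := by positivity
    obtain ⟨N, hN⟩ : ∃ N : ℝ, ∀ t, N ≤ t → |H' t| ≤ 1/((k:ℝ)+1) := by
      have hev : ∀ᶠ t in atTop, |H' t| < 1/((k:ℝ)+1) := by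
        have := Metric.tendsto_nhds.mp hlim _ hε
        simpa [Real.dist_eq] using this
      obtain ⟨N, hN⟩ := eventually_atTop.mp hev
      exact ⟨N, fun t ht => le_of_lt (hN t ht)⟩
    set B : ℝ := max (max 1 (k:ℝ)) N with hB
    have hB1 : (1:ℝ) ≤ B := le_trans (le_max_left _ _) (le_max_left _ _)
    have hB0 : (0:ℝ) < B := lt_of_lt_of_le one_pos hB1
    set G : ℝ → ℝ := fun T => H (T + A) - H T with hGdef
    have hGcont : ContinuousOn G (Set.Ici B) := by
      apply ContinuousOn.sub
      · apply hHcont.comp ((continuous_id.add continuous_const).continuousOn)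
        intro x hx
        have : B ≤ x := hx
        simp only [Set.mem_Ioi, id_eq, Pi.add_apply]
        linarith
      · apply hHcont.mono
        intro x hx
        have : B ≤ x := hx
        simp only [Set.mem_Ioi]
        linarith
    have hCbound : ∀ X, B ≤ X → |∫ t in B..X, G t| ≤ 2 * (M * A) := by
      intro X hX
      have hX0 : 0 < X := lt_of_lt_of_le hB0 hX
      have hsplit : ∫ t in B..X, G t =
          (∫ t in X..(X + A), H t) - ∫ t in B..(B + A), H t := by
        have e1 : ∫ t in B..X, G t =
            (∫ t in B..X, H (t + A)) - ∫ t in B..X, H t := by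
          apply intervalIntegral.integral_sub
          · have := (hHint (B + A) (X + A) (by linarith) (by linarith)).comp_add_right A
            simpa using this
          · exact hHint B X hB0 hX0
        have e2 : ∫ t in B..X, H (t + A) = ∫ t in (B + A)..(X + A), H t :=
          intervalIntegral.integral_comp_add_right H A
        have e3 : (∫ t in (B+A)..X, H t) + ∫ t in X..(X + A), H t
            = ∫ t in (B+A)..(X+A), H t :=
          intervalIntegral.integral_add_adjacent_intervals
            (hHint _ _ (by linarith) hX0) (hHint _ _ hX0 (by linarith))
        have e4 : (∫ t in B..(B+A), H t) + ∫ t in (B+A)..X, H t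
            = ∫ t in B..X, H t :=
          intervalIntegral.integral_add_adjacent_intervals
            (hHint _ _ hB0 (by linarith)) (hHint _ _ (by linarith) hX0)
        rw [e1, e2, ← e3, ← e4]
        ring
      rw [hsplit]
      have b1 : |∫ t in X..(X + A), H t| ≤ M * A := by
        have := intervalIntegral.norm_integral_le_of_norm_le_const
          (C := M) (f := H) (a := X) (b := X + A) ?_
        · simpa [abs_of_pos hA] using this
        · intro x hx
          have hx1 : X < x := by
            have := hx.1
            rwa [min_eq_left (by linarith : X ≤ X + A)] at this
          simpa using hbdd x (by linarith)
      have b2 : |∫ t in B..(B + A), H t| ≤ M * A := by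
        have := intervalIntegral.norm_integral_le_of_norm_le_const
          (C := M) (f := H) (a := B) (b := B + A) ?_
        · simpa [abs_of_pos hA] using this
        · intro x hx
          have hx1 : B < x := by
            have := hx.1
            rwa [min_eq_left (by linarith : B ≤ B + A)] at this
          simpa using hbdd x (by linarith)
      calc |(∫ t in X..(X + A), H t) - ∫ t in B..(B + A), H t|
          ≤ |∫ t in X..(X + A), H t| + |∫ t in B..(B + A), H t| := abs_sub _ _
        _ ≤ 2 * (M * A) := by linarith
    obtain ⟨T, hTB, hTsmall⟩ := exists_small G B (2 * (M * A)) (1/((k:ℝ)+1))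
      hB1 hε hGcont hCbound
    have hT1 : (1:ℝ) ≤ T := le_trans hB1 hTB
    refine ⟨T, hT1, le_trans (le_trans (le_max_right _ _) (le_max_left _ _)) hTB, ?_, ?_⟩
    · rw [abs_mul, abs_of_pos (by linarith : (0:ℝ) < T)]
      exact hTsmall
    · intro t ht
      exact hN t (le_trans (le_trans (le_max_right _ _) hTB) ht)
  choose T hT1 hTk hTsmall hTH' using key
  refine ⟨T, ?_, ?_⟩
  · exact tendsto_atTop_mono hTk tendsto_natCast_atTop_atTop
  · apply squeeze_zero_norm (a := fun k : ℕ => (1/A + A) * (1/((k:ℝ)+1)))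
    · intro k
      set Tk := T k with hTkdef
      set e := 1/((k:ℝ)+1) with hedef
      have he0 : (0:ℝ) < e := by positivity
      have hTk1 : (1:ℝ) ≤ Tk := hT1 k
      have hTk0 : (0:ℝ) < Tk := by linarith
      have hTkA : (0:ℝ) < Tk + A := by linarith
      have hftc : ∫ t in Tk..(Tk + A), H' t = H (Tk + A) - H Tk := by
        apply intervalIntegral.integral_eq_sub_of_hasDerivAt
        · intro t ht
          have h1 : Tk ≤ t := by
            rw [Set.uIcc_of_le (by linarith : Tk ≤ Tk + A)] at ht
            exact ht.1
          exact hderiv t (by linarith)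
        · exact hH'int _ _ hTk0 hTkA
      have hintsub : IntervalIntegrable (fun t => (t - Tk) * H' t) volume Tk (Tk + A) := by
        apply ContinuousOn.intervalIntegrable
        apply ContinuousOn.mul
        · exact (continuous_id.sub continuous_const).continuousOn
        · apply hcont.mono
          intro x hx
          rw [Set.uIcc_of_le (by linarith : Tk ≤ Tk + A)] at hx
          simp only [Set.mem_Ioi]
          linarith [hx.1]
      have hintc : IntervalIntegrable (fun t => Tk * H' t) volume Tk (Tk + A) :=
        (hH'int _ _ hTk0 hTkA).const_mul Tk
      have hsplit : ∫ t in Tk..(Tk + A), t * H' t =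
          (∫ t in Tk..(Tk + A), (t - Tk) * H' t) + Tk * (H (Tk + A) - H Tk) := by
        rw [← hftc, ← intervalIntegral.integral_const_mul,
          ← intervalIntegral.integral_add hintsub hintc]
        congr 1
        ext t
        ring
      have hbnd1 : |∫ t in Tk..(Tk + A), (t - Tk) * H' t| ≤ A * e * A := by
        have := intervalIntegral.norm_integral_le_of_norm_le_const
          (C := A * e) (f := fun t => (t - Tk) * H' t) (a := Tk) (b := Tk + A) ?_
        · simpa [abs_of_pos hA] using this
        · intro x hx
          rw [Set.uIoc_of_le (by linarith : Tk ≤ Tk + A)] at hx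
          have hx1 : Tk < x := hx.1
          have hx2 : x ≤ Tk + A := hx.2
          have : ‖(x - Tk) * H' x‖ = |x - Tk| * |H' x| := abs_mul _ _
          rw [this]
          apply mul_le_mul
          · rw [abs_of_pos (by linarith)]; linarith
          · exact hTH' k x (le_of_lt hx1)
          · exact abs_nonneg _
          · linarith
      have hbnd2 : |Tk * (H (Tk + A) - H Tk)| ≤ e := le_of_lt (hTsmall k)
      have : ‖(1 / A) * ∫ t in Tk..(Tk + A), t * H' t‖ ≤ (1/A) * (A * e * A + e) := by
        rw [norm_mul, Real.norm_eq_abs, Real.norm_eq_abs,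
          abs_of_pos (by positivity : (0:ℝ) < 1/A), hsplit]
        apply mul_le_mul_of_nonneg_left ?_ (by positivity)
        calc |(∫ t in Tk..(Tk + A), (t - Tk) * H' t) + Tk * (H (Tk + A) - H Tk)|
            ≤ |∫ t in Tk..(Tk + A), (t - Tk) * H' t| + |Tk * (H (Tk + A) - H Tk)| :=
              abs_add_le _ _
          _ ≤ A * e * A + e := by linarith
      refine le_trans this (le_of_eq ?_)
      field_simp
      ring
    · have h0 : Tendsto (fun k : ℕ => 1/((k:ℝ)+1)) atTop (nhds 0) :=
        tendsto_one_div_add_atTop_nhds_zero_nat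
      have := h0.const_mul (1/A + A)
      simpa using this
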